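/- For every n ≥ 1, applying the operator ∂_s(∂_c∂_s)^n to the quaternionic power function x ↦ x^{2n} gives the identically zero function; likewise ∂_c(∂_s∂_c)^n x^{2n} ≡ 0. For every n ≥ 0, (∂_c∂_s)^{n+1} x^{2n+1} ≡ 0 and (∂_s∂_c)^{n+1} x^{2n+1} ≡ 0. -/

import Mathlib

noncomputable section

open Quaternion

abbrev ℍq := Quaternion ℝ

/-- Spherical value of a function of a quaternionic variable. -/
def svalue (f : ℍq → ℍq) (x : ℍq) : ℍq := (f x + f (star x)) / 2

/-- Spherical derivative of a function of a quaternionic variable. -/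
def sderiv' (f : ℍq → ℍq) (x : ℍq) : ℍq := (2 * x.im)⁻¹ * (f x - f (star x))

/-- The imaginary unit `Im(x)/|Im(x)|` attached to a (non-real) quaternion. -/
def qJ (x : ℍq) : ℍq := (‖x.im‖)⁻¹ • x.im

/-- Slice (Cullen) derivative `∂_c f = (1/2)(∂/∂α − I ∂/∂β) f` at `x = α + Iβ`. -/
def cderiv (f : ℍq → ℍq) (x : ℍq) : ℍq :=
  (1/2 : ℝ) • (fderiv ℝ f x 1 - qJ x * fderiv ℝ f x (qJ x))

/-- The conjugate operator `∂̄_c f = (1/2)(∂/∂α + I ∂/∂β) f`. -/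
def cderivBar (f : ℍq → ℍq) (x : ℍq) : ℍq :=
  (1/2 : ℝ) • (fderiv ℝ f x 1 + qJ x * fderiv ℝ f x (qJ x))

/-- A circular (axially symmetric) subset of the quaternions. -/
def IsCircular (Ω : Set ℍq) : Prop :=
  ∀ x ∈ Ω, ∀ y : ℍq, y.re = x.re → ‖y.im‖ = ‖x.im‖ → y ∈ Ω

/-- A slice function on `Ω`: it is determined by the representation formula
`f(α + Iβ) = F₀(α,β) + I F₁(α,β)` with `F₀ = v_s f`, `F₁ = β ∂_s f`. -/
def IsSlice (Ω : Set ℍq) (f : ℍq → ℍq) : Prop :=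
  ∀ x ∈ Ω, ∀ y ∈ Ω, x.re = y.re → ‖x.im‖ = ‖y.im‖ →
    f x = svalue f y + x.im * sderiv' f y

/-- A slice regular function on a circular domain: a real-differentiable slice
function whose stem function is holomorphic, i.e. `∂̄_c f = 0` off the reals. -/
def IsSliceRegular (Ω : Set ℍq) (f : ℍq → ℍq) : Prop :=
  IsSlice Ω f ∧ DifferentiableOn ℝ f Ω ∧ ∀ x ∈ Ω, x.im ≠ 0 → cderivBar f x = 0

/-- Pointwise formula for the slice product `f·g = 𝓘(FG)` of two slice functions. -/
def sprod (f g : ℍq → ℍq) (x : ℍq) : ℍq :=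
  svalue f x * svalue g x + x.im * x.im * (sderiv' f x * sderiv' g x)
    + x.im * (svalue f x * sderiv' g x + sderiv' f x * svalue g x)

/-- Characteristic polynomial of `q₀`: `Δ_{q₀}(x) = x² − 2 Re(q₀) x + |q₀|²`. -/
def Delta (q₀ : ℍq) (x : ℍq) : ℍq := x ^ 2 - 2 * (q₀.re : ℍq) * x + ((‖q₀‖ ^ 2 : ℝ) : ℍq)

/-- The operator `∂_c ∂_s`. -/
def opCS (f : ℍq → ℍq) : ℍq → ℍq := cderiv (sderiv' f)

/-- The operator `∂_s ∂_c`. -/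
def opSC (f : ℍq → ℍq) : ℍq → ℍq := sderiv' (cderiv f)



def reCLM : ℍq →L[ℝ] ℝ :=
  LinearMap.toContinuousLinearMap
    { toFun := fun y : ℍq => y.re
      map_add' := fun a b => rfl
      map_smul' := fun r a => rfl }

def imCLM : ℍq →L[ℝ] ℍq :=
  LinearMap.toContinuousLinearMap
    { toFun := fun y : ℍq => y.im
      map_add' := fun a b => by simp
      map_smul' := fun r a => by simp }

def coeCLM : ℝ →L[ℝ] ℍq :=
  LinearMap.toContinuousLinearMap (Algebra.linearMap ℝ ℍq)

@[simp] lemma reCLM_apply (y : ℍq) : reCLM y = y.re := rfl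
@[simp] lemma imCLM_apply (y : ℍq) : imCLM y = y.im := rfl
@[simp] lemma coeCLM_apply (r : ℝ) : coeCLM r = (r : ℍq) := rfl

def ssq (x : ℍq) : ℝ := ‖x.im‖ ^ 2

lemma im_mul_im (x : ℍq) : x.im * x.im = ((-(ssq x) : ℝ) : ℍq) := by
  have h := Quaternion.im_sq x
  rw [sq] at h
  rw [h, ssq, Quaternion.normSq_eq_norm_mul_self, sq]
  push_cast
  ring_nf

lemma sq_eq (x : ℍq) : ssq x = -((x.im * x.im).re) := by
  rw [im_mul_im]; simp


lemma qJ_im (x : ℍq) : (qJ x).im = qJ x := by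
  simp [qJ, Quaternion.im_smul, Quaternion.im_idem]

lemma qJ_re (x : ℍq) : (qJ x).re = 0 := by
  simp [qJ, Quaternion.re_smul, Quaternion.re_im]

lemma im_mul_qJ (x : ℍq) (hx : x.im ≠ 0) : x.im * qJ x = ((-‖x.im‖ : ℝ) : ℍq) := by
  have hn : ‖x.im‖ ≠ 0 := by simpa using hx
  rw [qJ, mul_smul_comm, im_mul_im]
  rw [← Quaternion.coe_smul]
  congr 1
  rw [ssq]
  field_simp [ssq]
  rw [smul_eq_mul]
  field_simp

lemma qJ_mul_im (x : ℍq) (hx : x.im ≠ 0) : qJ x * x.im = ((-‖x.im‖ : ℝ) : ℍq) := by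
  have hn : ‖x.im‖ ≠ 0 := by simpa using hx
  rw [qJ, smul_mul_assoc, im_mul_im, ← Quaternion.coe_smul]
  congr 1
  rw [ssq]
  field_simp [ssq]
  rw [smul_eq_mul]
  field_simp

lemma qJ_mul_qJ (x : ℍq) (hx : x.im ≠ 0) : qJ x * qJ x = -1 := by
  have hn : ‖x.im‖ ≠ 0 := by simpa using hx
  have h : x.im * qJ x = ((-‖x.im‖ : ℝ) : ℍq) := im_mul_qJ x hx
  nth_rewrite 1 [qJ]
  rw [smul_mul_assoc, h, ← Quaternion.coe_smul, ← Quaternion.coe_one, ← Quaternion.coe_neg]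
  congr 1
  rw [smul_eq_mul]
  field_simp

def Lssq (x : ℍq) : ℍq →L[ℝ] ℝ := -(reCLM.comp (x.im • imCLM + imCLM.smulRight x.im))

lemma hfd_ssq (x : ℍq) : HasFDerivAt ssq (Lssq x) x := by
  have h1 : HasFDerivAt (fun y : ℍq => y.im) imCLM x := imCLM.hasFDerivAt
  have h2 := h1.mul' h1
  have h3 := (reCLM.hasFDerivAt (x := x.im * x.im)).comp x h2
  have h4 := h3.neg
  have he : ssq = fun y : ℍq => -((y.im * y.im).re) := funext sq_eq
  rw [he]
  exact h4

lemma Lssq_one (x : ℍq) : Lssq x 1 = 0 := by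
  simp [Lssq]

lemma Lssq_qJ (x : ℍq) (hx : x.im ≠ 0) : Lssq x (qJ x) = 2 * ‖x.im‖ := by
  simp only [Lssq, ContinuousLinearMap.neg_apply, ContinuousLinearMap.comp_apply,
    ContinuousLinearMap.add_apply, ContinuousLinearMap.smul_apply,
    ContinuousLinearMap.smulRight_apply, imCLM_apply, reCLM_apply, qJ_im]
  rw [smul_eq_mul, smul_eq_mul, im_mul_qJ x hx, qJ_mul_im x hx]
  push_cast
  simp
  ring

/-! Coefficient machinery -/

def hp (d : ℕ) (c : ℕ → ℝ) (α σ : ℝ) : ℝ :=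
  ∑ j ∈ Finset.range (d + 1), c j * α ^ (d - 2 * j) * σ ^ j

def OK (d : ℕ) (c : ℕ → ℝ) : Prop := ∀ j, d < 2 * j → c j = 0

def Lo (t : ℕ) (c : ℕ → ℝ) : Prop := ∀ j, t ≤ j → c j = 0

def dA (d : ℕ) (c : ℕ → ℝ) : ℕ → ℝ := fun j => ((d - 2 * j : ℕ) : ℝ) * c j

def dS (c : ℕ → ℝ) : ℕ → ℝ := fun j => ((j + 1 : ℕ) : ℝ) * c (j + 1)

def dM (c : ℕ → ℝ) : ℕ → ℝ := fun j => (2 * (j : ℝ) + 1) * c j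

def sh (c : ℕ → ℝ) : ℕ → ℝ := fun j => match j with
  | 0 => 0
  | (k + 1) => c k

lemma OK_mono {d e : ℕ} {c : ℕ → ℝ} (h : d ≤ e) (hc : OK d c) : OK e c :=
  fun j hj => hc j (lt_of_le_of_lt h hj)

lemma OK_dA {d : ℕ} {c : ℕ → ℝ} (hc : OK d c) : OK (d - 1) (dA d c) := by
  intro j hj
  rcases lt_or_ge d (2 * j) with h | h
  · simp [dA, hc j h]
  · have : d - 2 * j = 0 := by omega
    simp [dA, this]

lemma OK_dS {d : ℕ} {c : ℕ → ℝ} (hc : OK d c) : OK (d - 2) (dS c) := by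
  intro j hj
  have : c (j + 1) = 0 := hc (j + 1) (by omega)
  simp [dS, this]

lemma OK_dM {d : ℕ} {c : ℕ → ℝ} (hc : OK d c) : OK d (dM c) := by
  intro j hj; simp [dM, hc j hj]

lemma OK_sh {d : ℕ} {c : ℕ → ℝ} (hc : OK d c) : OK (d + 2) (sh c) := by
  intro j hj
  match j with
  | 0 => simp [sh]
  | (k + 1) => simpa [sh] using hc k (by omega)

lemma OK_zero (d : ℕ) : OK d (fun _ => 0) := fun _ _ => rfl

lemma OK_add {d : ℕ} {b c : ℕ → ℝ} (hb : OK d b) (hc : OK d c) :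
    OK d (fun j => b j + c j) := fun j hj => by simp [hb j hj, hc j hj]

lemma OK_sub {d : ℕ} {b c : ℕ → ℝ} (hb : OK d b) (hc : OK d c) :
    OK d (fun j => b j - c j) := fun j hj => by simp [hb j hj, hc j hj]

lemma OK_smul {d : ℕ} {c : ℕ → ℝ} (r : ℝ) (hc : OK d c) :
    OK d (fun j => r * c j) := fun j hj => by simp [hc j hj]

lemma OK_div {d : ℕ} {c : ℕ → ℝ} (r : ℝ) (hc : OK d c) :
    OK d (fun j => c j / r) := fun j hj => by simp [hc j hj]

lemma Lo_dS {t : ℕ} {c : ℕ → ℝ} (hc : Lo t c) : Lo (t - 1) (dS c) := by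
  intro j hj
  simp [dS, hc (j + 1) (by omega)]

lemma Lo_neg {t : ℕ} {c : ℕ → ℝ} (hc : Lo t c) : Lo t (fun j => -(c j)) := by
  intro j hj; simp [hc j hj]

lemma OK_to_Lo {d : ℕ} {c : ℕ → ℝ} (hc : OK d c) : Lo (d / 2 + 1) c := by
  intro j hj
  exact hc j (by omega)

lemma hp_congr {d : ℕ} {b c : ℕ → ℝ} (h : ∀ j, b j = c j) (α σ : ℝ) :
    hp d b α σ = hp d c α σ := by
  unfold hp; exact Finset.sum_congr rfl fun j _ => by rw [h j]

lemma hp_zero (d : ℕ) (α σ : ℝ) : hp d (fun _ => 0) α σ = by exact 0 := by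
  simp [hp]

lemma hp_eq_zero {d : ℕ} {c : ℕ → ℝ} (h : ∀ j, c j = 0) (α σ : ℝ) :
    hp d c α σ = 0 := by
  rw [hp_congr h]; simp [hp]

lemma hp_add (d : ℕ) (b c : ℕ → ℝ) (α σ : ℝ) :
    hp d (fun j => b j + c j) α σ = hp d b α σ + hp d c α σ := by
  simp [hp, ← Finset.sum_add_distrib, add_mul]

lemma hp_sub (d : ℕ) (b c : ℕ → ℝ) (α σ : ℝ) :
    hp d (fun j => b j - c j) α σ = hp d b α σ - hp d c α σ := by
  simp [hp, ← Finset.sum_sub_distrib, sub_mul]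

lemma hp_smul (d : ℕ) (r : ℝ) (c : ℕ → ℝ) (α σ : ℝ) :
    hp d (fun j => r * c j) α σ = r * hp d c α σ := by
  simp [hp, Finset.mul_sum, mul_assoc]

lemma hp_div (d : ℕ) (r : ℝ) (c : ℕ → ℝ) (α σ : ℝ) :
    hp d (fun j => c j / r) α σ = hp d c α σ / r := by
  simp [hp, Finset.sum_div, div_mul_eq_mul_div]

lemma hp_mulα {d : ℕ} {c : ℕ → ℝ} (hc : OK d c) (α σ : ℝ) :
    α * hp d c α σ = hp (d + 1) c α σ := by
  unfold hp
  rw [Finset.sum_range_succ (n := d + 1)]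
  have htop : c (d + 1) * α ^ (d + 1 - 2 * (d + 1)) * σ ^ (d + 1) = 0 := by
    rw [hc (d + 1) (by omega)]; ring
  rw [htop, add_zero, Finset.mul_sum]
  refine Finset.sum_congr rfl fun j hj => ?_
  rcases le_or_gt (2 * j) d with h | h
  · have : d + 1 - 2 * j = (d - 2 * j) + 1 := by omega
    rw [this, pow_succ]; ring
  · rw [hc j h]; ring

lemma hp_mulσ {d : ℕ} {c : ℕ → ℝ} (hc : OK d c) (α σ : ℝ) :
    σ * hp d c α σ = hp (d + 2) (sh c) α σ := by
  unfold hp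
  rw [Finset.sum_range_succ' (f := fun j => sh c j * α ^ (d + 2 - 2 * j) * σ ^ j) (n := d + 2)]
  have h0 : sh c 0 * α ^ (d + 2 - 2 * 0) * σ ^ 0 = 0 := by simp [sh]
  rw [h0, add_zero]
  rw [Finset.sum_range_succ (n := d + 1)]
  have htop : sh c (d + 1 + 1) * α ^ (d + 2 - 2 * (d + 1 + 1)) * σ ^ (d + 1 + 1) = 0 := by
    have : sh c (d + 1 + 1) = c (d + 1) := rfl
    rw [this, hc (d + 1) (by omega)]; ring
  rw [htop, add_zero, Finset.mul_sum]
  refine Finset.sum_congr rfl fun j hj => ?_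
  have hsh : sh c (j + 1) = c j := rfl
  rw [hsh]
  have : d + 2 - 2 * (j + 1) = d - 2 * j := by omega
  rw [this, pow_succ]
  ring

lemma hp_M {d : ℕ} {c : ℕ → ℝ} (hc : OK d c) (α σ : ℝ) :
    hp d c α σ + 2 * σ * hp (d - 2) (dS c) α σ = hp d (dM c) α σ := by
  rcases le_or_gt d 1 with hd | hd
  · have hdS : ∀ j, dS c j = 0 := fun j => by
      simp [dS, hc (j + 1) (by omega)]
    rw [hp_eq_zero hdS, mul_zero, add_zero]
    unfold hp
    refine Finset.sum_congr rfl fun j hj => ?_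
    rcases Nat.eq_zero_or_pos j with rfl | hjpos
    · simp [dM]
    · have hcj : c j = 0 := hc j (by omega)
      simp [dM, hcj]
  · obtain ⟨e, rfl⟩ : ∃ e, d = e + 2 := ⟨d - 2, by omega⟩
    have h1 : σ * hp (e + 2 - 2) (dS c) α σ = hp e (dS c) α σ * σ := by
      simp [mul_comm]
    have h2 : σ * hp e (dS c) α σ = hp (e + 2) (sh (dS c)) α σ :=
      hp_mulσ (OK_dS hc) α σ
    have h3 : hp (e + 2 - 2) (dS c) α σ = hp e (dS c) α σ := by norm_num
    rw [h3]
    have : 2 * σ * hp e (dS c) α σ = 2 * hp (e + 2) (sh (dS c)) α σ := by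
      rw [← h2]; ring
    rw [this, ← hp_smul]
    rw [← hp_add]
    refine hp_congr (fun j => ?_) α σ
    match j with
    | 0 => simp [sh, dM]
    | (k + 1) =>
      have : sh (dS c) (k + 1) = dS c k := rfl
      simp only [dM, this, dS]
      push_cast
      ring

lemma sumA {d : ℕ} {c : ℕ → ℝ} (hc : OK d c) (α σ : ℝ) :
    ∑ j ∈ Finset.range (d + 1),
        c j * (σ ^ j * (((d - 2 * j : ℕ) : ℝ) * α ^ (d - 2 * j - 1))) =
      hp (d - 1) (dA d c) α σ := by
  rcases Nat.eq_zero_or_pos d with rfl | hd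
  · simp [hp, dA]
  · obtain ⟨e, rfl⟩ : ∃ e, d = e + 1 := ⟨d - 1, by omega⟩
    unfold hp
    rw [Finset.sum_range_succ (n := e + 1)]
    have htop : c (e + 1) * (σ ^ (e + 1) *
        (((e + 1 - 2 * (e + 1) : ℕ) : ℝ) * α ^ (e + 1 - 2 * (e + 1) - 1))) = 0 := by
      have : e + 1 - 2 * (e + 1) = 0 := by omega
      rw [this]; simp
    rw [htop, add_zero]
    have : e + 1 - 1 = e := by omega
    rw [this]
    refine Finset.sum_congr rfl fun j hj => ?_
    have hexp : e + 1 - 2 * j - 1 = e - 2 * j := by omega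
    rw [hexp]
    simp only [dA]
    ring

lemma sumS {d : ℕ} {c : ℕ → ℝ} (hc : OK d c) (α σ : ℝ) :
    ∑ j ∈ Finset.range (d + 1),
        c j * (α ^ (d - 2 * j) * ((j : ℝ) * σ ^ (j - 1))) =
      hp (d - 2) (dS c) α σ := by
  rw [Finset.sum_range_succ' (f := fun j => c j * (α ^ (d - 2 * j) * ((j : ℝ) * σ ^ (j - 1))))]
  simp only [Nat.cast_zero, zero_mul, mul_zero, add_zero]
  rcases le_or_gt d 1 with hd | hd
  · have h1 : c 1 = 0 := hc 1 (by omega)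
    have hz : ∀ j, dS c j = 0 := fun j => by simp [dS, hc (j + 1) (by omega)]
    rw [hp_eq_zero hz]
    interval_cases d <;> simp [h1]
  · obtain ⟨e, rfl⟩ : ∃ e, d = e + 2 := ⟨d - 2, by omega⟩
    unfold hp
    have : e + 2 - 2 = e := by omega
    rw [this]
    rw [Finset.sum_range_succ (n := e + 1)]
    have htop : c (e + 1 + 1) * (α ^ (e + 2 - 2 * (e + 1 + 1)) *
        (((e + 1 + 1 : ℕ) : ℝ) * σ ^ (e + 1 + 1 - 1))) = 0 := by
      rw [hc (e + 1 + 1) (by omega)]; ring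
    push_cast at htop ⊢
    rw [htop, add_zero]
    refine Finset.sum_congr rfl fun j hj => ?_
    simp only [dS]
    have hexp : e + 2 - 2 * (j + 1) = e - 2 * j := by omega
    rw [hexp]
    push_cast
    ring_nf

lemma key {d : ℕ} {c : ℕ → ℝ} (hc : OK d c) (x : ℍq) (hx : x.im ≠ 0) :
    ∃ L : ℍq →L[ℝ] ℝ, HasFDerivAt (fun y : ℍq => hp d c y.re (ssq y)) L x ∧
      L 1 = hp (d - 1) (dA d c) x.re (ssq x) ∧
      L (qJ x) = 2 * ‖x.im‖ * hp (d - 2) (dS c) x.re (ssq x) := by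
  have hre : HasFDerivAt (fun y : ℍq => y.re) reCLM x := reCLM.hasFDerivAt
  have hσ : HasFDerivAt ssq (Lssq x) x := hfd_ssq x
  set α := x.re
  set σ := ssq x
  have hterm : ∀ j ∈ Finset.range (d + 1),
      HasFDerivAt (fun y : ℍq => c j * (y.re ^ (d - 2 * j) * ssq y ^ j))
        (c j • ((α ^ (d - 2 * j)) • ((j * σ ^ (j - 1)) • Lssq x)
          + (σ ^ j) • ((((d - 2 * j : ℕ) : ℝ) * α ^ (d - 2 * j - 1)) • reCLM))) x := by
    intro j _
    have h1 : HasFDerivAt (fun y : ℍq => y.re ^ (d - 2 * j))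
        ((((d - 2 * j : ℕ) : ℝ) * α ^ (d - 2 * j - 1)) • reCLM) x :=
      (hasDerivAt_pow (d - 2 * j) α).comp_hasFDerivAt x hre
    have h2 : HasFDerivAt (fun y : ℍq => ssq y ^ j)
        (((j : ℝ) * σ ^ (j - 1)) • Lssq x) x :=
      (hasDerivAt_pow j σ).comp_hasFDerivAt x hσ
    exact (h1.mul h2).const_mul (c j)
  have hsum := HasFDerivAt.sum hterm
  refine ⟨∑ j ∈ Finset.range (d + 1),
      c j • ((α ^ (d - 2 * j)) • (((j : ℝ) * σ ^ (j - 1)) • Lssq x)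
        + (σ ^ j) • ((((d - 2 * j : ℕ) : ℝ) * α ^ (d - 2 * j - 1)) • reCLM)), ?_, ?_, ?_⟩
  · have hfun : (fun y : ℍq => hp d c y.re (ssq y)) = ∑ i ∈ Finset.range (d + 1),
        fun y : ℍq => c i * (y.re ^ (d - 2 * i) * ssq y ^ i) := by
      funext y
      simp [hp, mul_assoc]
    rw [hfun]
    exact hsum
  · simp only [ContinuousLinearMap.sum_apply, ContinuousLinearMap.smul_apply,
      ContinuousLinearMap.add_apply, Lssq_one x, reCLM_apply, Quaternion.re_one]
    rw [← sumA hc α σ]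
    refine Finset.sum_congr rfl fun j hj => ?_
    simp only [smul_eq_mul]
    ring
  · simp only [ContinuousLinearMap.sum_apply, ContinuousLinearMap.smul_apply,
      ContinuousLinearMap.add_apply, Lssq_qJ x hx, reCLM_apply, qJ_re]
    rw [← sumS hc α σ, Finset.mul_sum]
    refine Finset.sum_congr rfl fun j hj => ?_
    simp only [smul_eq_mul]
    ring



def SRep (d : ℕ) (a b : ℕ → ℝ) (f : ℍq → ℍq) : Prop :=
  OK d a ∧ OK (d - 1) b ∧ ∀ x : ℍq, x.im ≠ 0 →
    f x = ((hp d a x.re (ssq x) : ℝ) : ℍq) + x.im * ((hp (d - 1) b x.re (ssq x) : ℝ) : ℍq)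

lemma ssq_star (x : ℍq) : ssq (star x) = ssq x := by
  simp [ssq, Quaternion.star_im]

lemma rep_sderiv' {d : ℕ} {a b : ℕ → ℝ} {f : ℍq → ℍq} (h : SRep d a b f)
    (x : ℍq) (hx : x.im ≠ 0) :
    sderiv' f x = ((hp (d - 1) b x.re (ssq x) : ℝ) : ℍq) := by
  obtain ⟨ha, hb, hf⟩ := h
  have hsx : (star x).im ≠ 0 := by
    rw [Quaternion.im_star]; simpa using hx
  have h1 := hf x hx
  have h2 := hf (star x) hsx
  rw [Quaternion.im_star, Quaternion.re_star, ssq_star] at h2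
  rw [sderiv', h1, h2]
  have h20 : (2 : ℍq) ≠ 0 := by
    intro hcon
    have hre := congrArg QuaternionAlgebra.re hcon
    rw [show (2 : ℍq) = ((2 : ℕ) : ℍq) by norm_cast] at hre
    rw [Quaternion.re_natCast] at hre
    norm_num at hre
  have h2x : (2 : ℍq) * x.im ≠ 0 := mul_ne_zero h20 hx
  have : ((hp d a x.re (ssq x) : ℝ) : ℍq) + x.im * ((hp (d - 1) b x.re (ssq x) : ℝ) : ℍq)
      - (((hp d a x.re (ssq x) : ℝ) : ℍq) + -x.im * ((hp (d - 1) b x.re (ssq x) : ℝ) : ℍq))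
      = (2 * x.im) * ((hp (d - 1) b x.re (ssq x) : ℝ) : ℍq) := by noncomm_ring
  rw [this, inv_mul_cancel_left₀ h2x]

/-- sderiv' of a represented function is itself represented (with no `im` part). -/
lemma rep_sderiv'_rep {d : ℕ} {a b : ℕ → ℝ} {f : ℍq → ℍq} (h : SRep d a b f) :
    SRep (d - 1) b (fun _ => 0) (sderiv' f) := by
  refine ⟨h.2.1, OK_zero _, fun x hx => ?_⟩
  rw [rep_sderiv' h x hx, hp_eq_zero (fun _ => rfl)]
  simp

lemma rep_cderiv_rep {d : ℕ} {a b : ℕ → ℝ} {f : ℍq → ℍq} (h : SRep d a b f) :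
    SRep (d - 1) (fun j => (dA d a j + dM b j) / 2)
      (fun j => (dA (d - 1) b j - 2 * dS a j) / 2) (cderiv f) := by
  obtain ⟨ha, hb, hf⟩ := h
  have hdd : d - 1 - 1 = d - 2 := by omega
  refine ⟨OK_div 2 (OK_add (OK_dA ha) (OK_dM hb)), ?_, ?_⟩
  · refine OK_div 2 (OK_sub (OK_dA hb) (OK_smul 2 ?_))
    rw [hdd]; exact OK_dS ha
  intro x hx
  set α := x.re with hα
  set σ := ssq x with hσ
  set β := ‖x.im‖ with hβ
  have hβ0 : β ≠ 0 := by simpa [hβ] using hx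
  obtain ⟨La, hLa, hLa1, hLaJ⟩ := key ha x hx
  obtain ⟨Lb, hLb, hLb1, hLbJ⟩ := key hb x hx
  set P := hp d a α σ
  set Q := hp (d - 1) b α σ
  set Pα := hp (d - 1) (dA d a) α σ
  set Qα := hp (d - 1 - 1) (dA (d - 1) b) α σ
  set Pσ := hp (d - 2) (dS a) α σ
  set Qσ := hp (d - 1 - 2) (dS b) α σ
  -- the globally-defined comparison function
  set g : ℍq → ℍq := fun y =>
    ((hp d a y.re (ssq y) : ℝ) : ℍq) + y.im * ((hp (d - 1) b y.re (ssq y) : ℝ) : ℍq) with hg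
  have hga : HasFDerivAt (fun y : ℍq => ((hp d a y.re (ssq y) : ℝ) : ℍq))
      (coeCLM.comp La) x := coeCLM.hasFDerivAt.comp x hLa
  have hgb : HasFDerivAt (fun y : ℍq => ((hp (d - 1) b y.re (ssq y) : ℝ) : ℍq))
      (coeCLM.comp Lb) x := coeCLM.hasFDerivAt.comp x hLb
  have him : HasFDerivAt (fun y : ℍq => y.im) imCLM x := imCLM.hasFDerivAt
  have hmul := him.mul' hgb
  have hgd := hga.add hmul
  have hopen : IsOpen {y : ℍq | y.im ≠ 0} :=
    isOpen_compl_singleton.preimage imCLM.continuous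
  have hfg : f =ᶠ[nhds x] g :=
    Filter.eventuallyEq_of_mem (hopen.mem_nhds hx) (fun y hy => hf y hy)
  have hfd : fderiv ℝ f x = coeCLM.comp La +
      (x.im • (coeCLM.comp Lb) + imCLM.smulRight ((Q : ℝ) : ℍq)) := by
    rw [hfg.fderiv_eq]
    refine hgd.fderiv.trans ?_
    congr 2
  have hE1 : fderiv ℝ f x 1 = ((Pα : ℝ) : ℍq) + x.im * ((Qα : ℝ) : ℍq) := by
    rw [hfd]
    simp only [ContinuousLinearMap.add_apply, ContinuousLinearMap.comp_apply,
      ContinuousLinearMap.smul_apply, ContinuousLinearMap.smulRight_apply,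
      coeCLM_apply, imCLM_apply, hLa1, hLb1, Quaternion.im_one, zero_smul, add_zero,
      smul_eq_mul, zero_mul]
  have hEJ : fderiv ℝ f x (qJ x) = ((2 * β * Pσ : ℝ) : ℍq)
      + x.im * ((2 * β * Qσ : ℝ) : ℍq) + qJ x * ((Q : ℝ) : ℍq) := by
    rw [hfd]
    simp only [ContinuousLinearMap.add_apply, ContinuousLinearMap.comp_apply,
      ContinuousLinearMap.smul_apply, ContinuousLinearMap.smulRight_apply,
      coeCLM_apply, imCLM_apply, hLaJ, hLbJ, qJ_im, smul_eq_mul]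
    rw [add_assoc]
  have h1 : qJ x * ((2 * β * Pσ : ℝ) : ℍq) = x.im * ((2 * Pσ : ℝ) : ℍq) := by
    rw [qJ, smul_mul_assoc, Quaternion.mul_coe_eq_smul, Quaternion.mul_coe_eq_smul,
      smul_smul]
    congr 1
    field_simp
    ring
  have hσβ : σ = β ^ 2 := rfl
  have h2 : qJ x * (x.im * ((2 * β * Qσ : ℝ) : ℍq)) = ((-(2 * σ * Qσ) : ℝ) : ℍq) := by
    rw [← mul_assoc, qJ_mul_im x hx, ← Quaternion.coe_mul]
    congr 1
    rw [hσβ]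
    ring
  have h3 : qJ x * (qJ x * ((Q : ℝ) : ℍq)) = -((Q : ℝ) : ℍq) := by
    rw [← mul_assoc, qJ_mul_qJ x hx, neg_one_mul]
  have hA : hp (d - 1) (fun j => (dA d a j + dM b j) / 2) α σ
      = (Pα + (Q + 2 * σ * Qσ)) / 2 := by
    rw [hp_div, hp_add, ← hp_M hb]
  have hPσ' : hp (d - 1 - 1) (dS a) α σ = Pσ := by rw [hdd]
  have hB : hp (d - 1 - 1) (fun j => (dA (d - 1) b j - 2 * dS a j) / 2) α σ
      = (Qα - 2 * Pσ) / 2 := by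
    rw [hp_div, hp_sub, hp_smul, hPσ']
  rw [hA, hB]
  show (1/2 : ℝ) • (fderiv ℝ f x 1 - qJ x * fderiv ℝ f x (qJ x)) = _
  rw [hE1, hEJ, mul_add, mul_add, h1, h2, h3]
  have inner : ((Pα : ℝ) : ℍq) + x.im * ((Qα : ℝ) : ℍq)
      - (x.im * ((2 * Pσ : ℝ) : ℍq) + ((-(2 * σ * Qσ) : ℝ) : ℍq) + -((Q : ℝ) : ℍq))
      = (((Pα + (Q + 2 * σ * Qσ)) : ℝ) : ℍq) + x.im * (((Qα - 2 * Pσ) : ℝ) : ℍq) := by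
    push_cast
    noncomm_ring
  rw [inner]
  rw [smul_add, ← Quaternion.coe_smul, ← mul_smul_comm, ← Quaternion.coe_smul]
  norm_num [smul_eq_mul]
  rw [div_eq_mul_inv, div_eq_mul_inv, ← Quaternion.coe_inv,
    Quaternion.coe_commutes, Quaternion.coe_commutes]
  congr 1
  rw [Quaternion.coe_commutes]

def pab : ℕ → (ℕ → ℝ) × (ℕ → ℝ)
  | 0 => (fun j => if j = 0 then 1 else 0, fun _ => 0)
  | (m + 1) => (fun j => (pab m).1 j - sh (pab m).2 j, fun j => (pab m).1 j + (pab m).2 j)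

lemma sh_zero (j : ℕ) : sh (fun _ => (0 : ℝ)) j = 0 := by cases j <;> rfl

lemma pow_rep : ∀ m : ℕ, SRep m (pab m).1 (pab m).2 (fun y : ℍq => y ^ m) := by
  intro m
  induction m with
  | zero =>
    refine ⟨?_, ?_, ?_⟩
    · intro j hj
      simp only [pab]
      have : j ≠ 0 := by omega
      simp [this]
    · intro j hj; rfl
    · intro x hx
      simp [hp, pab]
  | succ m ih =>
    obtain ⟨ha1, ha2, hval⟩ := ih
    have hsh2 : OK (m + 1) (sh (pab m).2) := by
      rcases m with _ | k
      · intro j hj; exact sh_zero j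
      · exact OK_mono (by omega) (OK_sh ha2)
    refine ⟨?_, ?_, ?_⟩
    · exact OK_sub (OK_mono (Nat.le_succ m) ha1) hsh2
    · simp only [Nat.add_sub_cancel]
      exact OK_add ha1 (OK_mono (by omega) ha2)
    · intro x hx
      have hx' : x ^ m = ((hp m (pab m).1 x.re (ssq x) : ℝ) : ℍq)
          + x.im * ((hp (m - 1) (pab m).2 x.re (ssq x) : ℝ) : ℍq) := by
        simpa using hval x hx
      set α := x.re
      set σ := ssq x
      set P' := hp m (pab m).1 α σ
      set Q' := hp (m - 1) (pab m).2 α σ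
      have him2 : x.im * x.im = ((-σ : ℝ) : ℍq) := im_mul_im x
      have hcomm : ((α : ℝ) : ℍq) * x.im = x.im * ((α : ℝ) : ℍq) :=
        Quaternion.coe_commutes _ _
      have hre : ((α : ℝ) : ℍq) + x.im = x := x.re_add_im
      have e1 : x ^ (m + 1) = ((α * P' - σ * Q' : ℝ) : ℍq)
          + x.im * ((P' + α * Q' : ℝ) : ℍq) := by
        rw [pow_succ', hx']
        nth_rewrite 1 [← hre]
        calc (((α : ℝ) : ℍq) + x.im) * (((P' : ℝ) : ℍq) + x.im * ((Q' : ℝ) : ℍq))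
            = ((α : ℝ) : ℍq) * ((P' : ℝ) : ℍq)
              + (((α : ℝ) : ℍq) * x.im) * ((Q' : ℝ) : ℍq)
              + (x.im * ((P' : ℝ) : ℍq) + (x.im * x.im) * ((Q' : ℝ) : ℍq)) := by
                noncomm_ring
          _ = ((α * P' : ℝ) : ℍq) + x.im * (((α : ℝ) : ℍq) * ((Q' : ℝ) : ℍq))
              + (x.im * ((P' : ℝ) : ℍq) + ((-σ : ℝ) : ℍq) * ((Q' : ℝ) : ℍq)) := by
                rw [hcomm, him2, ← Quaternion.coe_mul, mul_assoc]
          _ = ((α * P' - σ * Q' : ℝ) : ℍq) + x.im * ((P' + α * Q' : ℝ) : ℍq) := by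
                push_cast
                noncomm_ring
      show x ^ (m + 1) = _
      rw [e1]
      have hαP : α * P' = hp (m + 1) (pab m).1 α σ := hp_mulα ha1 α σ
      have hσQ : σ * Q' = hp (m + 1) (sh (pab m).2) α σ := by
        rcases m with _ | k
        · have hq0 : Q' = 0 := hp_eq_zero (fun _ => rfl) α σ
          rw [hq0, mul_zero]
          exact (hp_eq_zero (fun j => sh_zero j) α σ).symm
        · exact hp_mulσ ha2 α σ
      have hαQ : P' + α * Q' = hp m (fun j => (pab m).1 j + (pab m).2 j) α σ := by
        rw [hp_add]
        rcases m with _ | k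
        · have hq0 : Q' = 0 := hp_eq_zero (fun _ => rfl) α σ
          have hq0' : hp 0 (pab 0).2 α σ = 0 := hp_eq_zero (fun _ => rfl) α σ
          rw [hq0, hq0', mul_zero, add_zero]
        · rw [hp_mulα ha2 α σ]
          norm_num
          rfl
      congr 1
      · congr 1
        rw [hαP, hσQ, ← hp_sub]
        rfl
      · congr 1
        rw [hαQ]
        simp only [Nat.add_sub_cancel]
        rfl



lemma opCS_step {d : ℕ} {a b : ℕ → ℝ} {f : ℍq → ℍq} (h : SRep d a b f) :
    SRep (d - 2) (fun j => (dA (d - 1) b j + dM (fun _ => (0:ℝ)) j) / 2)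
      (fun j => (dA (d - 1 - 1) (fun _ => (0:ℝ)) j - 2 * dS b j) / 2) (opCS f) := by
  have h1 := rep_sderiv'_rep h
  have h2 := rep_cderiv_rep h1
  have e : d - 1 - 1 = d - 2 := by omega
  rw [e] at h2
  exact h2

lemma opSC_step {d : ℕ} {a b : ℕ → ℝ} {f : ℍq → ℍq} (h : SRep d a b f) :
    SRep (d - 2) (fun j => (dA (d - 1) b j - 2 * dS a j) / 2) (fun _ => (0:ℝ)) (opSC f) := by
  have h2 := rep_cderiv_rep h
  have h3 := rep_sderiv'_rep h2
  have e : d - 1 - 1 = d - 2 := by omega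
  rw [e] at h3
  exact h3

lemma opCS_chain {d t : ℕ} {a b : ℕ → ℝ} {f : ℍq → ℍq}
    (h : SRep d a b f) (hLo : Lo t b) (k : ℕ) :
    ∃ a' b', SRep (d - 2 * k) a' b' (opCS^[k] f) ∧ Lo (t - k) b' := by
  induction k with
  | zero => exact ⟨a, b, by simpa using h, by simpa using hLo⟩
  | succ k ih =>
    obtain ⟨a', b', hrep, hlo⟩ := ih
    have h2 := opCS_step hrep
    have e : d - 2 * k - 2 = d - 2 * (k + 1) := by omega
    rw [e] at h2
    rw [← Function.iterate_succ_apply' opCS k f] at h2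
    refine ⟨_, _, h2, ?_⟩
    intro j hj
    have : b' (j + 1) = 0 := hlo (j + 1) (by omega)
    simp [dA, dS, this]

lemma opSC_chain {d : ℕ} {a b : ℕ → ℝ} {f : ℍq → ℍq} (h : SRep d a b f) (k : ℕ) :
    ∃ a' b', SRep (d - 2 * k) a' b' (opSC^[k] f) := by
  induction k with
  | zero => exact ⟨a, b, by simpa using h⟩
  | succ k ih =>
    obtain ⟨a', b', hrep⟩ := ih
    have h2 := opSC_step hrep
    have e : d - 2 * k - 2 = d - 2 * (k + 1) := by omega
    rw [e] at h2
    rw [← Function.iterate_succ_apply' opSC k f] at h2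
    exact ⟨_, _, h2⟩

lemma opSC_chain0 {d : ℕ} {a : ℕ → ℝ} {f : ℍq → ℍq}
    (h : SRep d a (fun _ => (0:ℝ)) f) (k : ℕ) :
    ∃ a', SRep (d - 2 * k) a' (fun _ => (0:ℝ)) (opSC^[k] f) := by
  induction k with
  | zero => exact ⟨a, by simpa using h⟩
  | succ k ih =>
    obtain ⟨a', hrep⟩ := ih
    have h2 := opSC_step hrep
    have e : d - 2 * k - 2 = d - 2 * (k + 1) := by omega
    rw [e] at h2
    rw [← Function.iterate_succ_apply' opSC k f] at h2
    exact ⟨_, h2⟩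

lemma pb_lo (m : ℕ) : Lo ((m - 1) / 2 + 1) (pab m).2 :=
  OK_to_Lo (pow_rep m).2.1

theorem alternate_derivatives_of_powers' :
    (∀ n : ℕ, 1 ≤ n → ∀ x : ℍq, x.im ≠ 0 →
        sderiv' (opCS^[n] (fun y : ℍq => y ^ (2*n))) x = 0
          ∧ cderiv (opSC^[n] (fun y : ℍq => y ^ (2*n))) x = 0)
    ∧ (∀ n : ℕ, ∀ x : ℍq, x.im ≠ 0 →
        opCS^[n+1] (fun y : ℍq => y ^ (2*n+1)) x = 0
          ∧ opSC^[n+1] (fun y : ℍq => y ^ (2*n+1)) x = 0) := by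
  constructor
  · intro n hn x hx
    constructor
    · -- even, ∂_s (∂_c∂_s)^n x^{2n} = 0
      have hrep0 := pow_rep (2 * n)
      have hlo0 : Lo n (pab (2 * n)).2 := by
        have := pb_lo (2 * n)
        have e : (2 * n - 1) / 2 + 1 = n := by omega
        rwa [e] at this
      obtain ⟨a', b', hrep, hlo⟩ := opCS_chain hrep0 hlo0 n
      have hb0 : ∀ j, b' j = 0 := fun j => hlo j (by omega)
      rw [rep_sderiv' hrep x hx, hp_eq_zero hb0]
      simp
    · -- even, ∂_c (∂_s∂_c)^n x^{2n} = 0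
      obtain ⟨m, rfl⟩ : ∃ m, n = m + 1 := ⟨n - 1, by omega⟩
      have h1 := opSC_step (pow_rep (2 * (m + 1)))
      obtain ⟨a', hrep⟩ := opSC_chain0 h1 m
      have e : 2 * (m + 1) - 2 - 2 * m = 0 := by omega
      rw [e] at hrep
      rw [← Function.iterate_succ_apply opSC m _] at hrep
      set b' : ℕ → ℝ := fun _ => (0:ℝ) with hb'
      have hb0 : ∀ j, b' j = 0 := fun _ => rfl
      have hcd := rep_cderiv_rep hrep
      obtain ⟨hoka, hokb, hval⟩ := hcd
      rw [hval x hx]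
      have hA : ∀ j, (dA 0 a' j + dM b' j) / 2 = 0 := by
        intro j
        have h1' : (0 - 2 * j : ℕ) = 0 := by omega
        simp [dA, dM, h1', hb0 j]
      have hB : ∀ j, (dA (0 - 1) b' j - 2 * dS a' j) / 2 = 0 := by
        intro j
        have ha0 : a' (j + 1) = 0 := hrep.1 (j + 1) (by omega)
        simp [dA, dS, ha0, hb0]
      rw [hp_eq_zero hA, hp_eq_zero hB]
      simp
  · intro n x hx
    constructor
    · -- odd, (∂_c∂_s)^{n+1} x^{2n+1} = 0
      have hrep0 := pow_rep (2 * n + 1)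
      have hlo0 : Lo (n + 1) (pab (2 * n + 1)).2 := by
        have := pb_lo (2 * n + 1)
        have e : (2 * n + 1 - 1) / 2 + 1 = n + 1 := by omega
        rwa [e] at this
      obtain ⟨a', b', hrep, hlo⟩ := opCS_chain hrep0 hlo0 n
      have ed : 2 * n + 1 - 2 * n = 1 := by omega
      rw [ed] at hrep
      have elo : n + 1 - n = 1 := by omega
      rw [elo] at hlo
      have h1 := rep_sderiv'_rep hrep
      have h2 := rep_cderiv_rep h1
      obtain ⟨hoka, hokb, hval⟩ := h2
      rw [Function.iterate_succ_apply' opCS n _]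
      show cderiv (sderiv' (opCS^[n] _)) x = 0
      rw [hval x hx]
      have hA : ∀ j, (dA (1 - 1) b' j + dM (fun _ => (0:ℝ)) j) / 2 = 0 := by
        intro j
        have h1' : (0 - 2 * j : ℕ) = 0 := by omega
        simp [dA, dM, h1']
      have hB : ∀ j, (dA (1 - 1 - 1) (fun _ => (0:ℝ)) j - 2 * dS b' j) / 2 = 0 := by
        intro j
        have : b' (j + 1) = 0 := hlo (j + 1) (by omega)
        simp [dA, dS, this]
      rw [hp_eq_zero hA, hp_eq_zero hB]
      simp
    · -- odd, (∂_s∂_c)^{n+1} x^{2n+1} = 0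
      obtain ⟨a', b', hrep⟩ := opSC_chain (pow_rep (2 * n + 1)) n
      have ed : 2 * n + 1 - 2 * n = 1 := by omega
      rw [ed] at hrep
      have h2 := rep_cderiv_rep hrep
      have h3 := rep_sderiv'_rep h2
      rw [Function.iterate_succ_apply' opSC n _]
      show sderiv' (cderiv (opSC^[n] _)) x = 0
      rw [rep_sderiv' h2 x hx]
      have hB : ∀ j, (dA (1 - 1) b' j - 2 * dS a' j) / 2 = 0 := by
        intro j
        have h1' : (0 - 2 * j : ℕ) = 0 := by omega
        have ha0 : a' (j + 1) = 0 := hrep.1 (j + 1) (by omega)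
        simp [dA, dS, h1', ha0]
      rw [hp_eq_zero hB]
      simp

/-- alternated derivatives kill quaternionic power functions of the
appropriate degree. -/
theorem alternate_derivatives_of_powers :
    (∀ n : ℕ, 1 ≤ n → ∀ x : ℍq, x.im ≠ 0 →
        sderiv' (opCS^[n] (fun y : ℍq => y ^ (2*n))) x = 0
          ∧ cderiv (opSC^[n] (fun y : ℍq => y ^ (2*n))) x = 0)
    ∧ (∀ n : ℕ, ∀ x : ℍq, x.im ≠ 0 →
        opCS^[n+1] (fun y : ℍq => y ^ (2*n+1)) x = 0
          ∧ opSC^[n+1] (fun y : ℍq => y ^ (2*n+1)) x = 0) := by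
  exact alternate_derivatives_of_powers'
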